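/- Let d ≥ 2 be even, q an odd prime power, and χ a nontrivial additive character of F_q. Let C = {x ∈ F_q^{d+1} : x_1² + ... + x_{d-1}² = x_d x_{d+1}} and define the inverse Fourier transform of its normalized surface measure by (dσ_c)^∨(m) = |C|^{-1} Σ_{x ∈ C} χ(m·x). Then for every m ∈ F_q^{d+1} with m ≠ 0, |(dσ_c)^∨(m)| ≤ q^{-d/2}. -/

import Mathlib

open Finset

section Aux

variable {F : Type} [Field F] [Fintype F] [DecidableEq F]

noncomputable def qchar (F : Type) [Field F] [Fintype F] [DecidableEq F] : MulChar F ℂ :=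
  (quadraticChar F).ringHomComp (Int.castRingHom ℂ)

lemma qchar_ne_one (hchar : ringChar F ≠ 2) : qchar F ≠ 1 :=
  (MulChar.ringHomComp_ne_one_iff (fun a b h => by simpa using h)).mpr
    (quadraticChar_ne_one hchar)

lemma qchar_quad : (qchar F).IsQuadratic :=
  (quadraticChar_isQuadratic F).comp _

lemma qchar_vals (a : F) (ha : a ≠ 0) : qchar F a = 1 ∨ qchar F a = -1 := by
  rcases qchar_quad a with h | h | h
  · exfalso
    have : quadraticChar F a = 0 := by
      have : ((quadraticChar F a : ℤ) : ℂ) = 0 := h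
      exact_mod_cast this
    exact ha (quadraticChar_eq_zero_iff.mp this)
  · exact Or.inl h
  · exact Or.inr h

lemma qchar_mul_self (a : F) (ha : a ≠ 0) : qchar F a * qchar F a = 1 := by
  rcases qchar_vals a ha with h | h <;> rw [h] <;> norm_num

lemma qchar_abs (a : F) (ha : a ≠ 0) : ‖qchar F a‖ = 1 := by
  rcases qchar_vals a ha with h | h <;> rw [h] <;> simp

lemma qchar_inv (a : F) (ha : a ≠ 0) : qchar F a⁻¹ = qchar F a := by
  have h1 : qchar F a⁻¹ * qchar F a = 1 := by
    rw [← map_mul, inv_mul_cancel₀ ha, map_one]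
  calc qchar F a⁻¹ = qchar F a⁻¹ * (qchar F a * qchar F a) := by
        rw [qchar_mul_self a ha, mul_one]
    _ = (qchar F a⁻¹ * qchar F a) * qchar F a := by ring
    _ = qchar F a := by rw [h1, one_mul]

lemma qchar_sum_zero (hchar : ringChar F ≠ 2) : ∑ a : F, qchar F a = 0 := by
  have : ((∑ a : F, quadraticChar F a : ℤ) : ℂ) = 0 := by
    rw [quadraticChar_sum_zero hchar]; norm_num
  rw [← this]; push_cast
  rfl

omit [Fintype F] [DecidableEq F] in
lemma chi_map_sum {ι : Type*} (χ : AddChar F ℂ) (s : Finset ι) (f : ι → F) :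
    χ (∑ i ∈ s, f i) = ∏ i ∈ s, χ (f i) := by
  induction s using Finset.cons_induction with
  | empty => simp
  | cons a s ha ih => rw [Finset.sum_cons, Finset.prod_cons, AddChar.map_add_eq_mul, ih]

lemma sum_quad (hchar : ringChar F ≠ 2) (χ : AddChar F ℂ) (hχ : χ ≠ 1)
    (t : F) (ht : t ≠ 0) :
    ∑ x : F, χ (t * x ^ 2) = qchar F t * gaussSum (qchar F) χ := by
  have hprim : χ.IsPrimitive := AddChar.IsPrimitive.of_ne_one hχ
  have step1 : ∑ x : F, χ (t * x ^ 2) = ∑ u : F, (qchar F u + 1) * χ (t * u) := by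
    rw [← Finset.sum_fiberwise univ (fun x : F => x ^ 2) (fun x => χ (t * x ^ 2))]
    refine Finset.sum_congr rfl fun u _ => ?_
    have hc : ∀ x ∈ univ.filter (fun x : F => x ^ 2 = u), χ (t * x ^ 2) = χ (t * u) := by
      intro x hx
      rw [(Finset.mem_filter.mp hx).2]
    rw [Finset.sum_congr rfl hc, Finset.sum_const, nsmul_eq_mul]
    congr 1
    have hcard := quadraticChar_card_sqrts hchar u
    have : ({x : F | x ^ 2 = u}.toFinset) = univ.filter (fun x : F => x ^ 2 = u) := by
      ext x; simp
    rw [this] at hcard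
    have : ((univ.filter (fun x : F => x ^ 2 = u)).card : ℂ) =
        ((quadraticChar F u : ℤ) : ℂ) + 1 := by exact_mod_cast congrArg (fun z : ℤ => (z : ℂ)) hcard
    rw [this]; rfl
  rw [step1]
  have step2 : ∑ u : F, (qchar F u + 1) * χ (t * u)
      = (∑ u : F, qchar F u * χ (t * u)) + ∑ u : F, χ (t * u) := by
    simp [add_mul, Finset.sum_add_distrib]
  rw [step2]
  have h0 : ∑ u : F, χ (t * u) = 0 := by
    have := AddChar.sum_mulShift t hprim
    simp only [ht, if_false] at this
    calc ∑ u : F, χ (t * u) = ∑ u : F, χ (u * t) := by simp_rw [mul_comm]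
      _ = 0 := by exact_mod_cast this
  rw [h0, add_zero]
  -- now the Gauss sum with shift
  have key := gaussSum_mulShift (qchar F) χ (Units.mk0 t ht)
  have hgs : gaussSum (qchar F) (χ.mulShift (Units.mk0 t ht)) = ∑ u : F, qchar F u * χ (t * u) := by
    unfold gaussSum
    refine Finset.sum_congr rfl fun u _ => ?_
    rw [AddChar.mulShift_apply]
    rfl
  rw [hgs] at key
  calc ∑ u : F, qchar F u * χ (t * u)
      = (qchar F t * qchar F t) * ∑ u : F, qchar F u * χ (t * u) := by
        rw [qchar_mul_self t ht, one_mul]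
    _ = qchar F t * (qchar F t * ∑ u : F, qchar F u * χ (t * u)) := by ring
    _ = qchar F t * gaussSum (qchar F) χ := by
        rw [show (qchar F) (Units.mk0 t ht) = qchar F t from rfl] at key
        rw [key]

lemma sum_quad_lin (hchar : ringChar F ≠ 2) (χ : AddChar F ℂ) (hχ : χ ≠ 1)
    (t c : F) (ht : t ≠ 0) :
    ∑ x : F, χ (t * x ^ 2 + c * x)
      = χ (-(c ^ 2) / (4 * t)) * (qchar F t * gaussSum (qchar F) χ) := by
  have h2 : (2 : F) ≠ 0 := Ring.two_ne_zero hchar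
  have h4 : (4 : F) ≠ 0 := by
    rw [show (4 : F) = 2 * 2 by norm_num]; exact mul_ne_zero h2 h2
  have reindex := Equiv.sum_comp (Equiv.subRight (c / (2 * t)))
      (fun x : F => χ (t * x ^ 2 + c * x))
  rw [← reindex]
  have key : ∀ y : F, t * (Equiv.subRight (c / (2 * t)) y) ^ 2
      + c * (Equiv.subRight (c / (2 * t)) y) = t * y ^ 2 + -(c ^ 2) / (4 * t) := by
    intro y
    simp only [Equiv.subRight_apply]
    field_simp
    ring
  calc ∑ y : F, (fun x : F => χ (t * x ^ 2 + c * x)) (Equiv.subRight (c / (2 * t)) y)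
      = ∑ y : F, χ (-(c ^ 2) / (4 * t)) * χ (t * y ^ 2) := by
        refine Finset.sum_congr rfl fun y _ => ?_
        simp only
        rw [key y, AddChar.map_add_eq_mul, mul_comm]
    _ = χ (-(c ^ 2) / (4 * t)) * ∑ y : F, χ (t * y ^ 2) := by rw [Finset.mul_sum]
    _ = χ (-(c ^ 2) / (4 * t)) * (qchar F t * gaussSum (qchar F) χ) := by
        rw [sum_quad hchar χ hχ t ht]

-- hyperbolic part

lemma sum_hyper (χ : AddChar F ℂ) (hχ : χ ≠ 1) (u α β : F) (hu : u ≠ 0) :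
    ∑ a : F, ∑ b : F, χ (u * (a * b) + (α * a + β * b))
      = (Fintype.card F : ℂ) * χ (-(α * β) / u) := by
  have hprim : χ.IsPrimitive := AddChar.IsPrimitive.of_ne_one hχ
  have inner : ∀ a : F, ∑ b : F, χ (u * (a * b) + (α * a + β * b))
      = χ (α * a) * (if u * a + β = 0 then (Fintype.card F : ℂ) else 0) := by
    intro a
    have : ∀ b : F, χ (u * (a * b) + (α * a + β * b)) = χ (α * a) * χ (b * (u * a + β)) := by
      intro b
      rw [← AddChar.map_add_eq_mul]
      ring_nf
    simp_rw [this, ← Finset.mul_sum]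
    congr 1
    have := AddChar.sum_mulShift (u * a + β) hprim
    rw [this]
    split_ifs <;> norm_num
  simp_rw [inner]
  have cond : ∀ a : F, (u * a + β = 0) ↔ (a = -β / u) := by
    intro a
    constructor
    · intro h
      field_simp
      linear_combination h
    · intro h
      rw [h]
      field_simp
      ring
  have : ∀ a : F, χ (α * a) * (if u * a + β = 0 then (Fintype.card F : ℂ) else 0)
      = if a = -β / u then χ (α * a) * (Fintype.card F : ℂ) else 0 := by
    intro a
    rw [if_congr (cond a) rfl rfl, mul_ite, mul_zero]
  simp_rw [this]
  rw [Finset.sum_ite_eq' univ (-β / u) (fun a => χ (α * a) * (Fintype.card F : ℂ))]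
  simp only [mem_univ, if_true]
  rw [mul_comm]
  congr 2
  field_simp

lemma sum_eta (hchar : ringChar F ≠ 2) (χ : AddChar F ℂ) (hχ : χ ≠ 1) (c : F) :
    ∑ t ∈ univ.erase (0 : F), qchar F t * χ (c / t)
      = if c = 0 then 0 else qchar F c * gaussSum (qchar F) χ := by
  split_ifs with hc
  · subst hc
    have : ∀ t ∈ univ.erase (0 : F), qchar F t * χ (0 / t) = qchar F t := by
      intro t _
      rw [zero_div, AddChar.map_zero_eq_one, mul_one]
    rw [Finset.sum_congr rfl this]
    rw [Finset.sum_erase _ (by simp [qchar] : qchar F (0 : F) = 0)]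
    exact qchar_sum_zero hchar
  · -- reindex t ↦ c / t
    have hre : ∑ t ∈ univ.erase (0 : F), qchar F t * χ (c / t)
        = ∑ s ∈ univ.erase (0 : F), qchar F (c / s) * χ s := by
      refine Finset.sum_nbij' (fun t => c / t) (fun s => c / s) ?_ ?_ ?_ ?_ ?_
      · intro t ht
        simp only [mem_erase, mem_univ, and_true] at ht ⊢
        exact div_ne_zero hc ht
      · intro s hs
        simp only [mem_erase, mem_univ, and_true] at hs ⊢
        exact div_ne_zero hc hs
      · intro t ht
        simp only [mem_erase, mem_univ, and_true] at ht
        field_simp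
      · intro s hs
        simp only [mem_erase, mem_univ, and_true] at hs
        field_simp
      · intro t ht
        simp only [mem_erase, mem_univ, and_true] at ht
        congr 1
        rw [div_div_cancel₀]
        exact hc
    rw [hre]
    have hterm : ∀ s ∈ univ.erase (0 : F), qchar F (c / s) * χ s
        = qchar F c * (qchar F s * χ s) := by
      intro s hs
      simp only [mem_erase, mem_univ, and_true] at hs
      rw [div_eq_mul_inv, map_mul, qchar_inv s hs, mul_assoc]
    rw [Finset.sum_congr rfl hterm, ← Finset.mul_sum]
    congr 1
    rw [gaussSum]
    exact Finset.sum_erase _ (by simp [qchar])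

lemma master (χ : AddChar F ℂ) (hχ : χ ≠ 1) (n : ℕ) (m' : Fin n → F) (α β : F) :
    (Fintype.card F : ℂ) *
      ∑ x ∈ univ.filter (fun x : (Fin n → F) × F × F => ∑ i, (x.1 i) ^ 2 = x.2.1 * x.2.2),
        χ (∑ i, m' i * x.1 i + α * x.2.1 + β * x.2.2)
    = ∑ t : F,
        (∑ y : Fin n → F, χ (t * ∑ i, (y i) ^ 2 + ∑ i, m' i * y i)) *
        (∑ a : F, ∑ b : F, χ (-t * (a * b) + (α * a + β * b))) := by
  have hprim : χ.IsPrimitive := AddChar.IsPrimitive.of_ne_one hχ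
  have step1 : (Fintype.card F : ℂ) *
      ∑ x ∈ univ.filter (fun x : (Fin n → F) × F × F => ∑ i, (x.1 i) ^ 2 = x.2.1 * x.2.2),
        χ (∑ i, m' i * x.1 i + α * x.2.1 + β * x.2.2)
      = ∑ x : (Fin n → F) × F × F,
          χ (∑ i, m' i * x.1 i + α * x.2.1 + β * x.2.2) *
            ∑ t : F, χ (t * ((∑ i, (x.1 i) ^ 2) - x.2.1 * x.2.2)) := by
    rw [Finset.mul_sum, ← Finset.sum_filter_add_sum_filter_not univ
      (fun x : (Fin n → F) × F × F => ∑ i, (x.1 i) ^ 2 = x.2.1 * x.2.2)]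
    have h1 : ∀ x ∈ univ.filter (fun x : (Fin n → F) × F × F =>
        ∑ i, (x.1 i) ^ 2 = x.2.1 * x.2.2),
        χ (∑ i, m' i * x.1 i + α * x.2.1 + β * x.2.2) *
            ∑ t : F, χ (t * ((∑ i, (x.1 i) ^ 2) - x.2.1 * x.2.2))
          = (Fintype.card F : ℂ) * χ (∑ i, m' i * x.1 i + α * x.2.1 + β * x.2.2) := by
      intro x hx
      have hq : (∑ i, (x.1 i) ^ 2) - x.2.1 * x.2.2 = 0 := by
        rw [sub_eq_zero]; exact (Finset.mem_filter.mp hx).2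
      have := AddChar.sum_mulShift ((∑ i, (x.1 i) ^ 2) - x.2.1 * x.2.2) hprim
      rw [hq, if_pos rfl] at this
      have h2 : ∑ t : F, χ (t * ((∑ i, (x.1 i) ^ 2) - x.2.1 * x.2.2))
          = (Fintype.card F : ℂ) := by
        rw [hq]; simp
      rw [h2, mul_comm]
    have h2 : ∀ x ∈ univ.filter (fun x : (Fin n → F) × F × F =>
        ¬ (∑ i, (x.1 i) ^ 2 = x.2.1 * x.2.2)),
        χ (∑ i, m' i * x.1 i + α * x.2.1 + β * x.2.2) *
            ∑ t : F, χ (t * ((∑ i, (x.1 i) ^ 2) - x.2.1 * x.2.2))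
          = 0 := by
      intro x hx
      have hq : (∑ i, (x.1 i) ^ 2) - x.2.1 * x.2.2 ≠ 0 := by
        rw [sub_ne_zero]; exact (Finset.mem_filter.mp hx).2
      have := AddChar.sum_mulShift ((∑ i, (x.1 i) ^ 2) - x.2.1 * x.2.2) hprim
      rw [if_neg hq] at this
      have h3 : ∑ t : F, χ (t * ((∑ i, (x.1 i) ^ 2) - x.2.1 * x.2.2)) = 0 := by
        exact_mod_cast this
      rw [h3, mul_zero]
    rw [Finset.sum_congr rfl h1, Finset.sum_congr rfl h2, Finset.sum_const_zero, add_zero]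
  rw [step1]
  have step2 : ∑ x : (Fin n → F) × F × F,
      χ (∑ i, m' i * x.1 i + α * x.2.1 + β * x.2.2) *
        ∑ t : F, χ (t * ((∑ i, (x.1 i) ^ 2) - x.2.1 * x.2.2))
      = ∑ t : F, ∑ x : (Fin n → F) × F × F,
          χ (t * ((∑ i, (x.1 i) ^ 2) - x.2.1 * x.2.2))
            * χ (∑ i, m' i * x.1 i + α * x.2.1 + β * x.2.2) := by
    simp_rw [Finset.mul_sum]
    rw [Finset.sum_comm]
    simp_rw [mul_comm]
  rw [step2]
  refine Finset.sum_congr rfl fun t _ => ?_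
  -- factor the triple sum
  rw [Fintype.sum_prod_type]
  simp_rw [Fintype.sum_prod_type]
  have pointwise : ∀ (y : Fin n → F) (a b : F),
      χ (t * ((∑ i, (y i) ^ 2) - a * b)) * χ (∑ i, m' i * y i + α * a + β * b)
      = χ (t * ∑ i, (y i) ^ 2 + ∑ i, m' i * y i) * χ (-t * (a * b) + (α * a + β * b)) := by
    intro y a b
    rw [← AddChar.map_add_eq_mul, ← AddChar.map_add_eq_mul]
    congr 1
    ring
  simp_rw [pointwise]
  rw [Finset.sum_mul]
  refine Finset.sum_congr rfl fun y _ => ?_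
  simp_rw [← Finset.mul_sum]

lemma phi_ne_zero (hchar : ringChar F ≠ 2) (χ : AddChar F ℂ) (hχ : χ ≠ 1)
    (n : ℕ) (m' : Fin n → F) (α β : F) (t : F) (ht : t ≠ 0) :
    (∑ y : Fin n → F, χ (t * ∑ i, (y i) ^ 2 + ∑ i, m' i * y i)) *
      (∑ a : F, ∑ b : F, χ (-t * (a * b) + (α * a + β * b)))
    = (Fintype.card F : ℂ) * ((qchar F t) ^ n * (gaussSum (qchar F) χ) ^ n *
        χ ((α * β - (∑ i, (m' i) ^ 2) / 4) / t)) := by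
  have h2 : (2 : F) ≠ 0 := Ring.two_ne_zero hchar
  have h4 : (4 : F) ≠ 0 := by
    rw [show (4 : F) = 2 * 2 by norm_num]; exact mul_ne_zero h2 h2
  have fac1 : (∑ y : Fin n → F, χ (t * ∑ i, (y i) ^ 2 + ∑ i, m' i * y i))
      = χ (∑ i, -(m' i ^ 2) / (4 * t)) * ((qchar F t) ^ n * (gaussSum (qchar F) χ) ^ n) := by
    have e1 : ∀ y : Fin n → F, t * ∑ i, (y i) ^ 2 + ∑ i, m' i * y i
        = ∑ i, (t * (y i) ^ 2 + m' i * y i) := by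
      intro y
      rw [Finset.mul_sum, ← Finset.sum_add_distrib]
    simp_rw [e1]
    have e2 : ∀ y : Fin n → F, χ (∑ i, (t * (y i) ^ 2 + m' i * y i))
        = ∏ i, χ (t * (y i) ^ 2 + m' i * y i) := fun y => chi_map_sum χ univ _
    simp_rw [e2]
    rw [← Fintype.prod_sum (fun i (x : F) => χ (t * x ^ 2 + m' i * x))]
    have e3 : ∀ i : Fin n, ∑ x : F, χ (t * x ^ 2 + m' i * x)
        = χ (-(m' i ^ 2) / (4 * t)) * (qchar F t * gaussSum (qchar F) χ) :=
      fun i => sum_quad_lin hchar χ hχ t (m' i) ht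
    rw [Finset.prod_congr rfl (fun i _ => e3 i), Finset.prod_mul_distrib,
      Finset.prod_const, ← chi_map_sum, mul_pow]
    simp
  have fac2 : (∑ a : F, ∑ b : F, χ (-t * (a * b) + (α * a + β * b)))
      = (Fintype.card F : ℂ) * χ (-(α * β) / (-t)) :=
    sum_hyper χ hχ (-t) α β (neg_ne_zero.mpr ht)
  rw [fac1, fac2]
  have harg : (∑ i, -(m' i ^ 2) / (4 * t)) + -(α * β) / (-t)
      = (α * β - (∑ i, (m' i) ^ 2) / 4) / t := by
    rw [show (∑ i, -(m' i ^ 2) / (4 * t)) = (∑ i, -(m' i ^ 2)) / (4 * t) from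
      (Finset.sum_div _ _ _).symm]
    rw [neg_div_neg_eq]
    rw [show (∑ i, -(m' i ^ 2)) = -(∑ i, (m' i) ^ 2) by rw [Finset.sum_neg_distrib]]
    field_simp
    ring
  calc χ (∑ i, -(m' i ^ 2) / (4 * t)) * ((qchar F t) ^ n * gaussSum (qchar F) χ ^ n) *
        ((Fintype.card F : ℂ) * χ (-(α * β) / (-t)))
      = (Fintype.card F : ℂ) * ((qchar F t) ^ n * gaussSum (qchar F) χ ^ n *
          (χ (∑ i, -(m' i ^ 2) / (4 * t)) * χ (-(α * β) / (-t)))) := by ring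
    _ = (Fintype.card F : ℂ) * ((qchar F t) ^ n * gaussSum (qchar F) χ ^ n *
          χ ((α * β - (∑ i, (m' i) ^ 2) / 4) / t)) := by
        rw [← AddChar.map_add_eq_mul, harg]

lemma qchar_pow_odd (n : ℕ) (hn : Odd n) (t : F) (ht : t ≠ 0) :
    (qchar F t) ^ n = qchar F t := by
  rcases qchar_vals t ht with h | h <;> rw [h]
  · exact one_pow n
  · exact Odd.neg_one_pow hn

lemma sum_phi (hchar : ringChar F ≠ 2) (χ : AddChar F ℂ) (hχ : χ ≠ 1)
    (n : ℕ) (hn : Odd n) (m' : Fin n → F) (α β : F) :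
    ∑ t : F, (∑ y : Fin n → F, χ (t * ∑ i, (y i) ^ 2 + ∑ i, m' i * y i)) *
        (∑ a : F, ∑ b : F, χ (-t * (a * b) + (α * a + β * b)))
    = (∑ y : Fin n → F, χ ((0 : F) * ∑ i, (y i) ^ 2 + ∑ i, m' i * y i)) *
        (∑ a : F, ∑ b : F, χ (-(0 : F) * (a * b) + (α * a + β * b)))
      + (Fintype.card F : ℂ) * (gaussSum (qchar F) χ) ^ n *
        (if (α * β - (∑ i, (m' i) ^ 2) / 4) = 0 then 0 else
          qchar F (α * β - (∑ i, (m' i) ^ 2) / 4) * gaussSum (qchar F) χ) := by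
  rw [← Finset.add_sum_erase univ _ (mem_univ (0 : F))]
  congr 1
  have step : ∀ t ∈ univ.erase (0 : F),
      (∑ y : Fin n → F, χ (t * ∑ i, (y i) ^ 2 + ∑ i, m' i * y i)) *
        (∑ a : F, ∑ b : F, χ (-t * (a * b) + (α * a + β * b)))
      = ((Fintype.card F : ℂ) * (gaussSum (qchar F) χ) ^ n) *
          (qchar F t * χ ((α * β - (∑ i, (m' i) ^ 2) / 4) / t)) := by
    intro t ht
    have ht0 : t ≠ 0 := (Finset.mem_erase.mp ht).1
    rw [phi_ne_zero hchar χ hχ n m' α β t ht0, qchar_pow_odd n hn t ht0]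
    ring
  rw [Finset.sum_congr rfl step, ← Finset.mul_sum,
    sum_eta hchar χ hχ (α * β - (∑ i, (m' i) ^ 2) / 4)]

lemma card_C (hchar : ringChar F ≠ 2) (χ : AddChar F ℂ) (hχ : χ ≠ 1)
    (n : ℕ) (hn : Odd n) :
    (((univ.filter (fun x : (Fin n → F) × F × F =>
        ∑ i, (x.1 i) ^ 2 = x.2.1 * x.2.2)).card : ℂ)) = (Fintype.card F : ℂ) ^ (n + 1) := by
  have hq0 : (Fintype.card F : ℂ) ≠ 0 := by
    exact_mod_cast Nat.cast_ne_zero.mpr Fintype.card_ne_zero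
  have hmaster := master χ hχ n (fun _ => (0 : F)) 0 0
  rw [sum_phi hchar χ hχ n hn (fun _ => (0 : F)) 0 0] at hmaster
  simp only [zero_mul, mul_zero, neg_zero, add_zero, zero_add, zero_sub, zero_div,
    sub_zero, Finset.sum_const_zero, AddChar.map_zero_eq_one, Finset.sum_const,
    Finset.card_univ, nsmul_eq_mul, mul_one, zero_pow, ne_eq, OfNat.ofNat_ne_zero,
    not_false_iff, if_pos, Fintype.card_fun] at hmaster
  apply mul_left_cancel₀ hq0
  rw [hmaster]
  push_cast
  rw [Fintype.card_fin]
  ring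

lemma sum_lin (χ : AddChar F ℂ) (hχ : χ ≠ 1) (c : F) (hc : c ≠ 0) :
    ∑ a : F, χ (c * a) = 0 := by
  have hprim : χ.IsPrimitive := AddChar.IsPrimitive.of_ne_one hχ
  have := AddChar.sum_mulShift c hprim
  rw [if_neg hc] at this
  calc ∑ a : F, χ (c * a) = ∑ a : F, χ (a * c) := by simp_rw [mul_comm]
    _ = 0 := by exact_mod_cast this

lemma phi_zero_eq_zero (χ : AddChar F ℂ) (hχ : χ ≠ 1) (n : ℕ)
    (m' : Fin n → F) (α β : F) (hm : ¬(m' = 0 ∧ α = 0 ∧ β = 0)) :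
    (∑ y : Fin n → F, χ ((0 : F) * ∑ i, (y i) ^ 2 + ∑ i, m' i * y i)) *
      (∑ a : F, ∑ b : F, χ (-(0 : F) * (a * b) + (α * a + β * b))) = 0 := by
  simp only [zero_mul, neg_zero, zero_add]
  have second : ∀ γ δ : F, γ ≠ 0 ∨ δ ≠ 0 →
      (∑ a : F, ∑ b : F, χ (γ * a + δ * b)) = 0 := by
    intro γ δ h
    have e : ∀ a b : F, χ (γ * a + δ * b) = χ (γ * a) * χ (δ * b) :=
      fun a b => AddChar.map_add_eq_mul χ _ _
    simp_rw [e]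
    rw [← Finset.sum_mul_sum]
    rcases h with h | h
    · exact mul_eq_zero_of_left (sum_lin χ hχ γ h) _
    · exact mul_eq_zero_of_right _ (sum_lin χ hχ δ h)
  rcases eq_or_ne α 0 with hα | hα
  · rcases eq_or_ne β 0 with hβ | hβ
    · have hm' : m' ≠ 0 := fun h => hm ⟨h, hα, hβ⟩
      obtain ⟨i₀, hi₀⟩ : ∃ i, m' i ≠ 0 := by
        by_contra h
        push_neg at h
        exact hm' (funext h)
      apply mul_eq_zero_of_left
      have e2 : ∀ y : Fin n → F, χ (∑ i, m' i * y i)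
          = ∏ i, χ (m' i * y i) := fun y => chi_map_sum χ univ _
      simp_rw [e2]
      rw [← Fintype.prod_sum (fun i (x : F) => χ (m' i * x))]
      exact Finset.prod_eq_zero (mem_univ i₀) (sum_lin χ hχ (m' i₀) hi₀)
    · exact mul_eq_zero_of_right _ (second α β (Or.inr hβ))
  · exact mul_eq_zero_of_right _ (second α β (Or.inl hα))

end Aux

theorem fourier_decay_C
    (F : Type) [Field F] [Fintype F] [DecidableEq F]
    (hchar : ringChar F ≠ 2)
    (d : ℕ) (hd2 : 2 ≤ d) (hdeven : Even d)
    (χ : AddChar F ℂ) (hχ : χ ≠ 1)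
    (m : (Fin (d - 1) → F) × F × F) (hm : m ≠ 0) :
    ‖
      ((((univ.filter (fun x : (Fin (d - 1) → F) × F × F =>
            ∑ i, (x.1 i) ^ 2 = x.2.1 * x.2.2)).card : ℂ))⁻¹ *
        ∑ x ∈ univ.filter (fun x : (Fin (d - 1) → F) × F × F =>
            ∑ i, (x.1 i) ^ 2 = x.2.1 * x.2.2),
          χ (∑ i, m.1 i * x.1 i + m.2.1 * x.2.1 + m.2.2 * x.2.2))‖ ≤
      (Fintype.card F : ℝ) ^ (-(d : ℝ) / 2) := by
  have hq0 : (Fintype.card F : ℂ) ≠ 0 := by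
    exact_mod_cast Nat.cast_ne_zero.mpr Fintype.card_ne_zero
  have hqR : (0 : ℝ) < (Fintype.card F : ℝ) := by exact_mod_cast Fintype.card_pos
  have hprim : χ.IsPrimitive := AddChar.IsPrimitive.of_ne_one hχ
  have hd : (d - 1) + 1 = d := Nat.sub_add_cancel (le_trans one_le_two hd2)
  have hn : Odd (d - 1) := Nat.Even.sub_odd (le_trans one_le_two hd2) hdeven odd_one
  have hm0 : ¬(m.1 = 0 ∧ m.2.1 = 0 ∧ m.2.2 = 0) := by
    rintro ⟨h1, h2, h3⟩
    apply hm
    have hme : m = (m.1, m.2.1, m.2.2) := rfl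
    rw [hme, h1, h2, h3]
    rfl
  have hmaster := master χ hχ (d - 1) m.1 m.2.1 m.2.2
  rw [sum_phi hchar χ hχ (d - 1) hn m.1 m.2.1 m.2.2,
      phi_zero_eq_zero χ hχ (d - 1) m.1 m.2.1 m.2.2 hm0, zero_add, mul_assoc] at hmaster
  have hS := mul_left_cancel₀ hq0 hmaster
  rw [hS]
  have hcard := card_C hchar χ hχ (d - 1) hn
  rw [hcard]
  rcases eq_or_ne (m.2.1 * m.2.2 - (∑ i, (m.1 i) ^ 2) / 4) 0 with hc | hc
  · rw [if_pos hc, mul_zero, mul_zero, norm_zero]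
    exact Real.rpow_nonneg hqR.le _
  · rw [if_neg hc]
    obtain ⟨k, hk⟩ := hdeven
    have hGabs : ‖gaussSum (qchar F) χ‖ ^ 2 = (Fintype.card F : ℝ) := by
      have hG2 : (gaussSum (qchar F) χ) ^ 2 = qchar F (-1) * (Fintype.card F : ℂ) :=
        gaussSum_sq (qchar_ne_one hchar) qchar_quad hprim
      have h := congrArg (fun z : ℂ => ‖z‖) hG2
      rw [norm_pow, norm_mul, qchar_abs (-1) (neg_ne_zero.mpr one_ne_zero), one_mul,
        Complex.norm_natCast] at h
      exact h
    have key : ‖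
        (((Fintype.card F : ℂ) ^ ((d - 1) + 1))⁻¹ *
          ((gaussSum (qchar F) χ) ^ (d - 1) *
            (qchar F (m.2.1 * m.2.2 - (∑ i, (m.1 i) ^ 2) / 4) * gaussSum (qchar F) χ)))‖
        = ((Fintype.card F : ℝ) ^ d)⁻¹ * ‖gaussSum (qchar F) χ‖ ^ d := by
      rw [norm_mul, norm_inv, norm_pow, Complex.norm_natCast, norm_mul, norm_pow, norm_mul,
        qchar_abs _ hc, one_mul, ← pow_succ, hd]
    rw [key]
    have hr : ‖gaussSum (qchar F) χ‖ ^ d = (Fintype.card F : ℝ) ^ k := by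
      rw [hk, ← two_mul, pow_mul, hGabs]
    have hq : (Fintype.card F : ℝ) ^ d = (Fintype.card F : ℝ) ^ k * (Fintype.card F : ℝ) ^ k := by
      rw [hk, pow_add]
    have hrhs : (Fintype.card F : ℝ) ^ (-(d : ℝ) / 2) = ((Fintype.card F : ℝ) ^ k)⁻¹ := by
      have he : -(d : ℝ) / 2 = -(k : ℕ) := by
        rw [hk]; push_cast; ring
      rw [he, Real.rpow_neg hqR.le, Real.rpow_natCast]
    rw [hr, hq, hrhs]
    have hqk : (0 : ℝ) < (Fintype.card F : ℝ) ^ k := pow_pos hqR k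
    apply le_of_eq
    field_simp
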